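/- For every real ν > 1/2 and every integer n ≥ 1, one has P^{(ν)}_n(1) > 0 and Q^{(ν)}_{n−1}(1)/P^{(ν)}_n(1) = (2ν/(2ν−1))·(1 − Γ(2ν)·Γ(n+1)/Γ(n+2ν)), where Γ is the Gamma function. Consequently lim_{n→∞} P^{(ν)}_n(1)/Q^{(ν)}_{n−1}(1) = (2ν−1)/(2ν). -/

import Mathlib

open Polynomial Filter MeasureTheory

noncomputable section

/-- Recurrence coefficients `β_k = k(k+2ν−1)/(4(k+ν)(k+ν−1))` of the monic
ultraspherical polynomials. -/
def ultraBeta (ν : ℝ) (k : ℕ) : ℝ :=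
  k * (k + 2 * ν - 1) / (4 * (k + ν) * (k + ν - 1))

/-- Monic ultraspherical polynomials `P^{(ν)}_0 = 1`, `P^{(ν)}_1 = X`,
`P^{(ν)}_{k+1} = X·P^{(ν)}_k − β_k·P^{(ν)}_{k−1}`. -/
def ultraP (ν : ℝ) : ℕ → Polynomial ℝ
  | 0 => 1
  | 1 => X
  | (k + 2) => X * ultraP ν (k + 1) - C (ultraBeta ν (k + 1)) * ultraP ν k

/-- First-order numerator polynomials `Q^{(ν)}_0 = 1`, `Q^{(ν)}_1 = X`,
`Q^{(ν)}_{k+1} = X·Q^{(ν)}_k − β_{k+1}·Q^{(ν)}_{k−1}`. -/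
def ultraQ (ν : ℝ) : ℕ → Polynomial ℝ
  | 0 => 1
  | 1 => X
  | (k + 2) => X * ultraQ ν (k + 1) - C (ultraBeta ν (k + 2)) * ultraQ ν k

/-- Co-dilated ultraspherical polynomials: same recurrence as `ultraP ν`, except that
the single coefficient `β_1` is replaced by `λ·β_1`. -/
def ultraPstar (ν lam : ℝ) : ℕ → Polynomial ℝ
  | 0 => 1
  | 1 => X
  | (k + 2) => X * ultraPstar ν lam (k + 1) -
      C (if k + 1 = 1 then lam * ultraBeta ν 1 else ultraBeta ν (k + 1)) * ultraPstar ν lam k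

namespace UltraAux

/-- `A ν n = P^{(ν)}_n(1)`, given by the explicit product formula. -/
def A (ν : ℝ) : ℕ → ℝ
  | 0 => 1
  | n + 1 => A ν n * ((n + 2 * ν) / (2 * (n + ν)))

/-- `Cc ν n = Γ(2ν)·Γ(n+1)/Γ(n+2ν)`, given by the explicit product formula. -/
def Cc (ν : ℝ) : ℕ → ℝ
  | 0 => 1
  | n + 1 => Cc ν n * ((n + 1) / (n + 2 * ν))

variable {ν : ℝ}

lemma nu_pos (hν : 1 / 2 < ν) : 0 < ν := lt_trans (by norm_num) hν

lemma A_pos (hν : 1 / 2 < ν) : ∀ n, 0 < A ν n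
  | 0 => one_pos
  | n + 1 => by
    have h0 := nu_pos hν
    have h1 : (0:ℝ) < (n:ℝ) + 2 * ν := by positivity
    have h2 : (0:ℝ) < 2 * ((n:ℝ) + ν) := by positivity
    exact mul_pos (A_pos hν n) (div_pos h1 h2)

lemma Cc_pos (hν : 1 / 2 < ν) : ∀ n, 0 < Cc ν n
  | 0 => one_pos
  | n + 1 => by
    have h0 := nu_pos hν
    have h1 : (0:ℝ) < (n:ℝ) + 1 := by positivity
    have h2 : (0:ℝ) < (n:ℝ) + 2 * ν := by positivity
    exact mul_pos (Cc_pos hν n) (div_pos h1 h2)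

lemma Cc_succ_le (hν : 1 / 2 < ν) (n : ℕ) : Cc ν (n + 1) ≤ Cc ν n := by
  have h0 := nu_pos hν
  have h2 : (0:ℝ) < (n:ℝ) + 2 * ν := by positivity
  have hfac : ((n:ℝ) + 1) / ((n:ℝ) + 2 * ν) ≤ 1 := by
    rw [div_le_one h2]; nlinarith
  have := mul_le_of_le_one_right (Cc_pos hν n).le hfac
  simpa [Cc] using this

lemma Cc_lt_one (hν : 1 / 2 < ν) {n : ℕ} (hn : 1 ≤ n) : Cc ν n < 1 := by
  have h0 := nu_pos hν
  have h1 : Cc ν 1 < 1 := by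
    have : (0:ℝ) + 1 < (0:ℝ) + 2 * ν := by nlinarith
    have hlt : ((0:ℕ):ℝ) + 1 < ((0:ℕ):ℝ) + 2 * ν := by push_cast; nlinarith
    simp only [Cc]
    have : (((0:ℕ):ℝ) + 1) / (((0:ℕ):ℝ) + 2 * ν) < 1 := by
      rw [div_lt_one (by push_cast; nlinarith)]; exact hlt
    simpa using this
  have hmono : ∀ m, Cc ν (m + 1) ≤ Cc ν 1 := by
    intro m
    induction m with
    | zero => exact le_refl _
    | succ k ih => exact le_trans (Cc_succ_le hν (k + 1)) ih
  obtain ⟨m, rfl⟩ := Nat.exists_eq_add_of_le hn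
  exact lt_of_le_of_lt (by simpa [Nat.add_comm] using hmono m) h1

lemma A_rec (hν : 1 / 2 < ν) (k : ℕ) :
    A ν (k + 2) = A ν (k + 1) - ultraBeta ν (k + 1) * A ν k := by
  have h0 := nu_pos hν
  have h1 : ((k:ℝ) + ν) ≠ 0 := by positivity
  have h2 : ((k:ℝ) + 1 + ν) ≠ 0 := by positivity
  have hb : ultraBeta ν (k + 1)
      = (((k:ℝ) + 1) * ((k:ℝ) + 2 * ν)) / (4 * ((k:ℝ) + 1 + ν) * ((k:ℝ) + ν)) := by
    unfold ultraBeta; push_cast; ring_nf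
  simp only [A, hb]
  push_cast
  field_simp
  ring

lemma AC_rec (hν : 1 / 2 < ν) (k : ℕ) :
    Cc ν (k + 3) * A ν (k + 3) =
      Cc ν (k + 2) * A ν (k + 2) - ultraBeta ν (k + 2) * (Cc ν (k + 1) * A ν (k + 1)) := by
  have h0 := nu_pos hν
  have h1 : ((k:ℝ) + ν) ≠ 0 := by positivity
  have h2 : ((k:ℝ) + 1 + ν) ≠ 0 := by positivity
  have h3 : ((k:ℝ) + 2 + ν) ≠ 0 := by positivity
  have h4 : ((k:ℝ) + 2 * ν) ≠ 0 := by positivity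
  have h5 : ((k:ℝ) + 1 + 2 * ν) ≠ 0 := by positivity
  have h6 : ((k:ℝ) + 2 + 2 * ν) ≠ 0 := by positivity
  have hb : ultraBeta ν (k + 2)
      = (((k:ℝ) + 2) * ((k:ℝ) + 1 + 2 * ν)) / (4 * ((k:ℝ) + 2 + ν) * ((k:ℝ) + 1 + ν)) := by
    unfold ultraBeta; push_cast; ring_nf
  simp only [A, Cc, hb]
  push_cast
  field_simp
  ring

lemma evalP (hν : 1 / 2 < ν) : ∀ n, (ultraP ν n).eval 1 = A ν n
  | 0 => by simp [ultraP, A]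
  | 1 => by
    have h0 := nu_pos hν
    have h2 : ν ≠ 0 := ne_of_gt h0
    simp only [ultraP, A, eval_X]
    push_cast
    field_simp
    ring
  | (k + 2) => by
    have hk1 : (ultraP ν (k + 1)).eval 1 = A ν (k + 1) := evalP hν (k + 1)
    have hk : (ultraP ν k).eval 1 = A ν k := evalP hν k
    simp only [ultraP, eval_sub, eval_mul, eval_X, eval_C, one_mul, hk1, hk]
    exact (A_rec hν k).symm

lemma evalQ (hν : 1 / 2 < ν) : ∀ n,
    (ultraQ ν n).eval 1 = 2 * ν / (2 * ν - 1) * ((1 - Cc ν (n + 1)) * A ν (n + 1))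
  | 0 => by
    have h0 := nu_pos hν
    have h1 : (2 * ν - 1) ≠ 0 := by nlinarith
    have h2 : ν ≠ 0 := ne_of_gt h0
    simp only [ultraQ, Cc, A, eval_one, Nat.cast_zero]
    field_simp
    ring
  | 1 => by
    have h0 := nu_pos hν
    have h1 : (2 * ν - 1) ≠ 0 := by nlinarith
    have h2 : ν ≠ 0 := ne_of_gt h0
    have h3 : (1:ℝ) + ν ≠ 0 := by positivity
    have h4 : (1:ℝ) + 2 * ν ≠ 0 := by positivity
    simp only [ultraQ, Cc, A, eval_X, Nat.cast_zero, Nat.cast_one]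
    field_simp
    ring
  | (k + 2) => by
    have hk1 := evalQ hν (k + 1)
    have hk := evalQ hν k
    have h1 : A ν (k + 3) = A ν (k + 2) - ultraBeta ν (k + 2) * A ν (k + 1) := A_rec hν (k + 1)
    have h2 := AC_rec hν k
    simp only [ultraQ, eval_sub, eval_mul, eval_X, eval_C, one_mul, hk1, hk]
    show _ = 2 * ν / (2 * ν - 1) * ((1 - Cc ν (k + 3)) * A ν (k + 3))
    linear_combination (2 * ν / (2 * ν - 1)) * h2 - (2 * ν / (2 * ν - 1)) * h1

lemma gamma_eq (hν : 1 / 2 < ν) : ∀ n : ℕ,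
    Real.Gamma (2 * ν) * Real.Gamma (n + 1) / Real.Gamma (n + 2 * ν) = Cc ν n
  | 0 => by
    have h0 := nu_pos hν
    have hg : Real.Gamma (2 * ν) ≠ 0 := (Real.Gamma_pos_of_pos (by positivity)).ne'
    simp [Cc, Real.Gamma_one, div_self hg]
  | (n + 1) => by
    have h0 := nu_pos hν
    have ih := gamma_eq hν n
    have hgpos : 0 < Real.Gamma ((n:ℝ) + 2 * ν) := Real.Gamma_pos_of_pos (by positivity)
    have hA : Real.Gamma (((n:ℕ):ℝ) + 1 + 1) = ((n:ℝ) + 1) * Real.Gamma ((n:ℝ) + 1) :=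
      Real.Gamma_add_one (by positivity)
    have hB : Real.Gamma (((n:ℝ) + 2 * ν) + 1) = ((n:ℝ) + 2 * ν) * Real.Gamma ((n:ℝ) + 2 * ν) :=
      Real.Gamma_add_one (by positivity)
    have hc : ((n + 1 : ℕ) : ℝ) = (n:ℝ) + 1 := by push_cast; ring
    rw [show (((n+1:ℕ)):ℝ) + 1 = ((n:ℝ) + 1) + 1 by push_cast; ring,
      show (((n+1:ℕ)):ℝ) + 2 * ν = ((n:ℝ) + 2 * ν) + 1 by push_cast; ring, hA, hB]
    simp only [Cc, ← ih]
    have hn1 : ((n:ℝ) + 1) ≠ 0 := by positivity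
    have hn2 : ((n:ℝ) + 2 * ν) ≠ 0 := by positivity
    field_simp

lemma Cc_le_exp (hν : 1 / 2 < ν) : ∀ n,
    Cc ν n ≤ Real.exp (-(2 * ν - 1) * ∑ k ∈ Finset.range n, 1 / ((k:ℝ) + 2 * ν))
  | 0 => by simp [Cc]
  | (n + 1) => by
    have h0 := nu_pos hν
    have ha : (0:ℝ) < 2 * ν - 1 := by nlinarith
    have hd : (0:ℝ) < (n:ℝ) + 2 * ν := by positivity
    have ih := Cc_le_exp hν n
    have hfac : ((n:ℝ) + 1) / ((n:ℝ) + 2 * ν) ≤ Real.exp (-((2 * ν - 1) / ((n:ℝ) + 2 * ν))) := by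
      have hx : ((n:ℝ) + 1) / ((n:ℝ) + 2 * ν) = 1 - (2 * ν - 1) / ((n:ℝ) + 2 * ν) := by
        field_simp
        ring
      rw [hx]
      have := Real.add_one_le_exp (-((2 * ν - 1) / ((n:ℝ) + 2 * ν)))
      linarith
    have hfacnn : (0:ℝ) ≤ ((n:ℝ) + 1) / ((n:ℝ) + 2 * ν) := by positivity
    calc Cc ν (n + 1) = Cc ν n * (((n:ℝ) + 1) / ((n:ℝ) + 2 * ν)) := rfl
      _ ≤ Real.exp (-(2 * ν - 1) * ∑ k ∈ Finset.range n, 1 / ((k:ℝ) + 2 * ν)) *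
            Real.exp (-((2 * ν - 1) / ((n:ℝ) + 2 * ν))) := by
        apply mul_le_mul ih hfac hfacnn (Real.exp_nonneg _)
      _ = Real.exp (-(2 * ν - 1) * ∑ k ∈ Finset.range (n + 1), 1 / ((k:ℝ) + 2 * ν)) := by
        rw [← Real.exp_add, Finset.sum_range_succ]
        congr 1
        field_simp
        ring

lemma sum_tendsto (hν : 1 / 2 < ν) :
    Filter.Tendsto (fun n => ∑ k ∈ Finset.range n, 1 / ((k:ℝ) + 2 * ν)) atTop atTop := by
  have h0 := nu_pos hν
  have hcpos : (0:ℝ) < 1 / (2 * ν + 1) := by positivity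
  have hH : Filter.Tendsto
      (fun n => (1 / (2 * ν + 1)) * ∑ i ∈ Finset.range n, (1 / ((i:ℝ) + 1))) atTop atTop :=
    Real.tendsto_sum_range_one_div_nat_succ_atTop.const_mul_atTop hcpos
  apply tendsto_atTop_mono _ hH
  intro n
  rw [Finset.mul_sum]
  apply Finset.sum_le_sum
  intro i _
  have hi1 : (0:ℝ) < (i:ℝ) + 1 := by positivity
  have hi2 : (0:ℝ) < (i:ℝ) + 2 * ν := by positivity
  rw [div_mul_div_comm, one_mul]
  apply one_div_le_one_div_of_le hi2
  nlinarith

lemma Cc_tendsto (hν : 1 / 2 < ν) : Filter.Tendsto (Cc ν) atTop (nhds 0) := by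
  have h0 := nu_pos hν
  have ha : (0:ℝ) < 2 * ν - 1 := by nlinarith
  have h1 : Filter.Tendsto
      (fun n => (2 * ν - 1) * ∑ k ∈ Finset.range n, 1 / ((k:ℝ) + 2 * ν)) atTop atTop :=
    (sum_tendsto hν).const_mul_atTop ha
  have h2 : Filter.Tendsto
      (fun n => -(2 * ν - 1) * ∑ k ∈ Finset.range n, 1 / ((k:ℝ) + 2 * ν)) atTop atBot := by
    have h := tendsto_neg_atTop_atBot.comp h1
    have he : (fun n : ℕ => -(2 * ν - 1) * ∑ k ∈ Finset.range n, 1 / ((k:ℝ) + 2 * ν))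
        = (Neg.neg ∘ fun n : ℕ => (2 * ν - 1) * ∑ k ∈ Finset.range n, 1 / ((k:ℝ) + 2 * ν)) := by
      funext n; simp only [Function.comp]; ring
    rw [he]
    exact h
  have h3 : Filter.Tendsto
      (fun n => Real.exp (-(2 * ν - 1) * ∑ k ∈ Finset.range n, 1 / ((k:ℝ) + 2 * ν)))
      atTop (nhds 0) := Real.tendsto_exp_atBot.comp h2
  exact squeeze_zero (fun n => (Cc_pos hν n).le) (Cc_le_exp hν) h3

end UltraAux

theorem ultraspherical_numerator_quotient (ν : ℝ) (hν : 1 / 2 < ν) :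
    (∀ n : ℕ, 1 ≤ n →
      0 < (ultraP ν n).eval 1 ∧
      (ultraQ ν (n - 1)).eval 1 / (ultraP ν n).eval 1 =
        2 * ν / (2 * ν - 1) *
          (1 - Real.Gamma (2 * ν) * Real.Gamma (n + 1) / Real.Gamma (n + 2 * ν))) ∧
    Tendsto (fun n : ℕ => (ultraP ν n).eval 1 / (ultraQ ν (n - 1)).eval 1) atTop
      (nhds ((2 * ν - 1) / (2 * ν))) := by
  have h0 := UltraAux.nu_pos hν
  have hApos := UltraAux.A_pos hν
  have h2ν1 : (0:ℝ) < 2 * ν - 1 := by nlinarith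
  constructor
  · intro n hn
    obtain ⟨m, rfl⟩ : ∃ m, n = m + 1 := ⟨n - 1, (Nat.succ_pred_eq_of_pos hn).symm⟩
    refine ⟨by rw [UltraAux.evalP hν]; exact hApos _, ?_⟩
    rw [UltraAux.evalP hν, show m + 1 - 1 = m from rfl, UltraAux.evalQ hν,
      UltraAux.gamma_eq hν (m + 1), mul_div_assoc,
      mul_div_cancel_right₀ _ (hApos (m + 1)).ne']
  · have hlim0 := UltraAux.Cc_tendsto hν
    have h1 : Tendsto (fun n => 1 - UltraAux.Cc ν n) atTop (nhds 1) := by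
      have := (tendsto_const_nhds (α := ℕ) (x := (1:ℝ))).sub hlim0
      simpa using this
    have h2 : Tendsto (fun n => (1 - UltraAux.Cc ν n)⁻¹) atTop (nhds 1) := by
      simpa using h1.inv₀ one_ne_zero
    have h3 : Tendsto (fun n => (2 * ν - 1) / (2 * ν) * (1 - UltraAux.Cc ν n)⁻¹) atTop
        (nhds ((2 * ν - 1) / (2 * ν))) := by
      simpa using h2.const_mul ((2 * ν - 1) / (2 * ν))
    apply h3.congr'
    filter_upwards [eventually_ge_atTop 1] with n hn
    obtain ⟨m, rfl⟩ : ∃ m, n = m + 1 := ⟨n - 1, (Nat.succ_pred_eq_of_pos hn).symm⟩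
    have hClt : UltraAux.Cc ν (m + 1) < 1 := UltraAux.Cc_lt_one hν (Nat.le_add_left 1 m)
    have hCne : 1 - UltraAux.Cc ν (m + 1) ≠ 0 := by linarith
    rw [UltraAux.evalP hν, show m + 1 - 1 = m from rfl, UltraAux.evalQ hν]
    have hAne := (hApos (m + 1)).ne'
    have h2νne : (2 * ν : ℝ) ≠ 0 := by positivity
    field_simp

end
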